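/- There exist sets A, B ⊆ ℕ of positive integers and a constant c > 0 such that A(log x / log 2) · B(x) > c x for all sufficiently large x, yet the set C = { 2^a + b : a ∈ A, b ∈ B } has upper asymptotic density 0 (i.e., limsup_{x→∞} C(x)/x = 0). -/

import Mathlib

open Real Filter

/-- Counting function of a set of naturals: number of elements `≤ x`. -/
noncomputable def countOf (S : Set ℕ) (x : ℝ) : ℕ := Nat.card {n : ℕ | n ∈ S ∧ (n : ℝ) ≤ x}

open Classical in
/-- Natural-number counting function. -/
noncomputable def cntN (S : Set ℕ) (N : ℕ) : ℕ :=
  ((Finset.range (N+1)).filter (fun n => n ∈ S)).card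

open Classical in
lemma countOf_eq_cntN (S : Set ℕ) (x : ℝ) (hx : 0 ≤ x) :
    countOf S x = cntN S ⌊x⌋₊ := by
  have hset : {n : ℕ | n ∈ S ∧ (n:ℝ) ≤ x}
      = ↑((Finset.range (⌊x⌋₊+1)).filter (fun n => n ∈ S)) := by
    ext n
    simp only [Set.mem_setOf_eq, Finset.coe_filter, Finset.mem_range, Nat.lt_succ_iff,
      Nat.le_floor_iff hx]
    tauto
  rw [countOf, hset, Nat.card_coe_set_eq, Set.ncard_coe_finset, cntN]

/-- The set A : all positive naturals. -/
def Aset : Set ℕ := {n | 1 ≤ n}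

/-- The set B : in each window `[2^(2^m), 2^(2^(m+2)))` take multiples of `2^m - 1`. -/
def Bset : Set ℕ :=
  {n | ∃ m, 1 ≤ m ∧ 2^(2^m) ≤ n ∧ n < 2^(2^(m+2)) ∧ (2^m - 1) ∣ n}

/-- The sumset C. -/
def Cset : Set ℕ := {n : ℕ | ∃ a ∈ Aset, ∃ b ∈ Bset, n = 2 ^ a + b}

lemma two_le_two_pow {m : ℕ} (hm : 1 ≤ m) : 2 ≤ 2^m := by
  calc 2 = 2^1 := rfl
  _ ≤ 2^m := Nat.pow_le_pow_right (by norm_num) hm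

lemma cntN_Aset (N : ℕ) : cntN Aset N = N := by
  classical
  rw [cntN]
  have h : (Finset.range (N+1)).filter (fun n => n ∈ Aset) = Finset.Icc 1 N := by
    ext n
    simp only [Finset.mem_filter, Finset.mem_range, Finset.mem_Icc, Nat.lt_succ_iff]
    constructor
    · rintro ⟨h1, h2⟩; exact ⟨h2, h1⟩
    · rintro ⟨h1, h2⟩; exact ⟨h2, h1⟩
  rw [h, Nat.card_Icc]
  omega

/-- Lower bound for B in a window. -/
lemma cntN_Bset_lower {m N : ℕ} (hm : 1 ≤ m) (h1 : 2^(2^m) ≤ N) (h2 : N < 2^(2^(m+2))) :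
    N / (2^m - 1) - 2^(2^m) / (2^m - 1) ≤ cntN Bset N := by
  classical
  rw [cntN]
  set d := 2^m - 1 with hd
  set L := 2^(2^m) with hL
  have hdpos : 0 < d := by have := two_le_two_pow hm; omega
  have key : (Finset.Icc (L/d + 1) (N/d)).image (fun k => k * d)
      ⊆ (Finset.range (N+1)).filter (fun n => n ∈ Bset) := by
    intro n hn
    simp only [Finset.mem_image, Finset.mem_Icc] at hn
    obtain ⟨k, ⟨hk1, hk2⟩, rfl⟩ := hn
    have hle : k * d ≤ N := by
      calc k * d ≤ N/d * d := Nat.mul_le_mul_right d hk2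
      _ ≤ N := Nat.div_mul_le_self N d
    have hge : L < k * d := by
      have h3 : L < (L/d + 1) * d := by
        have h := Nat.div_add_mod L d
        have hmod : L % d < d := Nat.mod_lt L hdpos
        calc L = d * (L/d) + L % d := h.symm
        _ < d * (L/d) + d := by omega
        _ = (L/d + 1) * d := by ring
      calc L < (L/d + 1) * d := h3
      _ ≤ k * d := Nat.mul_le_mul_right d hk1
    refine Finset.mem_filter.2 ⟨Finset.mem_range.2 (by omega), ?_⟩
    exact ⟨m, hm, by omega, by omega, dvd_mul_left d k⟩
  have hinj : ∀ a ∈ Finset.Icc (L/d + 1) (N/d), ∀ b ∈ Finset.Icc (L/d + 1) (N/d),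
      a * d = b * d → a = b := by
    intro a _ b _ h
    exact Nat.eq_of_mul_eq_mul_right hdpos h
  have hcard := Finset.card_le_card key
  rw [Finset.card_image_of_injOn hinj, Nat.card_Icc] at hcard
  omega

lemma add_two_le_two_pow {m : ℕ} (hm : 2 ≤ m) : m + 2 ≤ 2^m := by
  induction m, hm using Nat.le_induction with
  | base => norm_num
  | succ k hk ih =>
    have h2 : 2^(k+1) = 2 * 2^k := by ring
    omega

lemma sq_le_two_pow {m : ℕ} (hm : 6 ≤ m) : (m+1)*(m+1) ≤ 2^m := by
  induction m, hm using Nat.le_induction with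
  | base => norm_num
  | succ k hk ih =>
    have h2 : 2^(k+1) = 2 * 2^k := by ring
    nlinarith

lemma lin_le_two_pow {m : ℕ} (hm : 4 ≤ m) : 2*m + 3 ≤ 2^m := by
  induction m, hm using Nat.le_induction with
  | base => norm_num
  | succ k hk ih =>
    have h2 : 2^(k+1) = 2 * 2^k := by ring
    omega

/-- 2^a ≡ 2^(a % m) mod (2^m - 1). -/
lemma pow_mod_cycle {m : ℕ} (hm : 1 ≤ m) (a : ℕ) :
    2^a ≡ 2^(a % m) [MOD 2^m - 1] := by
  conv_lhs => rw [← Nat.div_add_mod a m]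
  rw [pow_add, pow_mul]
  have h1 : (1:ℕ) ≡ 2^m [MOD 2^m - 1] := by
    have h2 : 1 ≤ (2:ℕ)^m := Nat.one_le_two_pow
    exact (Nat.modEq_iff_dvd' h2).2 dvd_rfl
  calc ((2:ℕ)^m)^(a/m) * 2^(a % m)
      ≡ 1^(a/m) * 2^(a % m) [MOD 2^m - 1] :=
        Nat.ModEq.mul ((h1.symm).pow _) (Nat.ModEq.refl _)
  _ = 2^(a % m) := by rw [one_pow, one_mul]

open Classical in
/-- Each residue class mod d contains at most N/d + 1 elements up to N. -/
lemma card_residue_class (N d r : ℕ) (hd : 0 < d) :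
    ((Finset.range (N+1)).filter (fun n => n % d = r % d)).card ≤ N / d + 1 := by
  have hsub : (Finset.range (N+1)).filter (fun n => n % d = r % d)
      ⊆ (Finset.range (N/d + 1)).image (fun k => k * d + r % d) := by
    intro n hn
    simp only [Finset.mem_filter, Finset.mem_range, Nat.lt_succ_iff] at hn
    obtain ⟨hn1, hn2⟩ := hn
    refine Finset.mem_image.2 ⟨n / d, Finset.mem_range.2 ?_, ?_⟩
    · have := Nat.div_le_div_right (c := d) hn1
      omega
    · rw [← hn2]
      have h := Nat.div_add_mod n d
      have : n / d * d = d * (n / d) := by ring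
      omega
  calc ((Finset.range (N+1)).filter (fun n => n % d = r % d)).card
      ≤ ((Finset.range (N/d + 1)).image (fun k => k * d + r % d)).card :=
        Finset.card_le_card hsub
  _ ≤ (Finset.range (N/d + 1)).card := Finset.card_image_le
  _ = N/d + 1 := Finset.card_range _

/-- Upper bound for C in a window. -/
lemma cntN_Cset_upper {M N : ℕ} (hM : 2 ≤ M) (h1 : 2^(2^(M+1)) ≤ N) (h2 : N < 2^(2^(M+2))) :
    cntN Cset N ≤ (Nat.log 2 N + 1) * 2^(2^M) + 3 * ((M+1) * (N / (2^(M-1) - 1) + 1)) := by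
  classical
  rw [cntN]
  set K := Nat.log 2 N with hK
  set T := 2^(2^M) with hT
  have hNpos : 0 < N := lt_of_lt_of_le (Nat.pow_pos (by norm_num)) h1
  set S1 : Finset ℕ := (Finset.range (K+1) ×ˢ Finset.range T).image (fun p => 2^p.1 + p.2)
    with hS1
  set S2 : Finset ℕ := (Finset.Icc (M-1) (M+1)).biUnion (fun m =>
    (Finset.range m).biUnion (fun r =>
      (Finset.range (N+1)).filter (fun n => n % (2^m - 1) = 2^r % (2^m - 1)))) with hS2
  have hsub : (Finset.range (N+1)).filter (fun n => n ∈ Cset) ⊆ S1 ∪ S2 := by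
    intro n hn
    simp only [Finset.mem_filter, Finset.mem_range, Nat.lt_succ_iff] at hn
    obtain ⟨hnN, a, ha, b, hb, rfl⟩ := hn
    obtain ⟨m, hm1, hbm1, hbm2, hdvd⟩ := hb
    rcases Nat.lt_or_ge b T with hbT | hbT
    · -- small b : goes to S1
      apply Finset.mem_union_left
      refine Finset.mem_image.2 ⟨(a, b), ?_, rfl⟩
      rw [Finset.mem_product]
      refine ⟨?_, Finset.mem_range.2 hbT⟩
      simp only [Finset.mem_range, Nat.lt_succ_iff, hK]
      have hpow : 2^a ≤ N := le_trans (Nat.le_add_right _ _) hnN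
      exact (Nat.le_log_iff_pow_le (by norm_num) (by omega)).2 hpow
    · -- large b : residue class, m close to M
      apply Finset.mem_union_right
      have hbN : b ≤ N := le_trans (Nat.le_add_left _ _) hnN
      have hmub : m ≤ M + 1 := by
        have hlt : 2^(2^m) < 2^(2^(M+2)) := lt_of_le_of_lt (le_trans hbm1 hbN) h2
        have := (Nat.pow_lt_pow_iff_right (a := 2) (by norm_num)).1 hlt
        have := (Nat.pow_lt_pow_iff_right (a := 2) (by norm_num)).1 this
        omega
      have hmlb : M - 1 ≤ m := by
        have hlt : 2^(2^M) < 2^(2^(m+2)) := lt_of_le_of_lt hbT hbm2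
        have := (Nat.pow_lt_pow_iff_right (a := 2) (by norm_num)).1 hlt
        have := (Nat.pow_lt_pow_iff_right (a := 2) (by norm_num)).1 this
        omega
      refine Finset.mem_biUnion.2 ⟨m, Finset.mem_Icc.2 ⟨hmlb, hmub⟩, ?_⟩
      refine Finset.mem_biUnion.2 ⟨a % m, Finset.mem_range.2 (Nat.mod_lt a (by omega)), ?_⟩
      refine Finset.mem_filter.2 ⟨Finset.mem_range.2 (by omega), ?_⟩
      have hcycle := pow_mod_cycle hm1 a
      have hb0 : b ≡ 0 [MOD 2^m - 1] := (Nat.modEq_zero_iff_dvd).2 hdvd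
      have hfin : (2^a + b) ≡ (2^(a % m) + 0) [MOD 2^m - 1] := Nat.ModEq.add hcycle hb0
      simpa [Nat.ModEq] using hfin
  have hS1card : S1.card ≤ (K+1) * T := by
    calc S1.card ≤ ((Finset.range (K+1)) ×ˢ (Finset.range T)).card := Finset.card_image_le
    _ = (K+1) * T := by rw [Finset.card_product, Finset.card_range, Finset.card_range]
  have hS2card : S2.card ≤ 3 * ((M+1) * (N/(2^(M-1)-1)+1)) := by
    have hd'pos : 0 < 2^(M-1) - 1 := by
      have := two_le_two_pow (m := M-1) (by omega); omega
    calc S2.card ≤ ∑ m ∈ Finset.Icc (M-1) (M+1),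
          ((Finset.range m).biUnion (fun r =>
            (Finset.range (N+1)).filter (fun n => n % (2^m - 1) = 2^r % (2^m - 1)))).card :=
          Finset.card_biUnion_le
    _ ≤ ∑ m ∈ Finset.Icc (M-1) (M+1), (M+1) * (N/(2^(M-1)-1)+1) := by
        apply Finset.sum_le_sum
        intro m hm
        simp only [Finset.mem_Icc] at hm
        have hm1 : 1 ≤ m := by omega
        have hdmpos : 0 < 2^m - 1 := by have := two_le_two_pow hm1; omega
        calc ((Finset.range m).biUnion (fun r =>
              (Finset.range (N+1)).filter (fun n => n % (2^m - 1) = 2^r % (2^m - 1)))).card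
            ≤ ∑ r ∈ Finset.range m,
              ((Finset.range (N+1)).filter (fun n => n % (2^m - 1) = 2^r % (2^m - 1))).card :=
              Finset.card_biUnion_le
        _ ≤ ∑ _r ∈ Finset.range m, (N/(2^m - 1)+1) :=
              Finset.sum_le_sum (fun r _ => card_residue_class N _ _ hdmpos)
        _ = m * (N/(2^m - 1)+1) := by
              rw [Finset.sum_const, Finset.card_range, smul_eq_mul]
        _ ≤ (M+1) * (N/(2^(M-1)-1)+1) := by
              apply Nat.mul_le_mul hm.2
              have hd : 2^(M-1) - 1 ≤ 2^m - 1 := by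
                have := Nat.pow_le_pow_right (show 1 ≤ 2 by norm_num) hm.1
                omega
              have := Nat.div_le_div_left hd hd'pos (a := N)
              omega
    _ = 3 * ((M+1) * (N/(2^(M-1)-1)+1)) := by
        rw [Finset.sum_const, Nat.card_Icc, smul_eq_mul]
        congr 1
        omega
  calc ((Finset.range (N+1)).filter (fun n => n ∈ Cset)).card
      ≤ (S1 ∪ S2).card := Finset.card_le_card hsub
  _ ≤ S1.card + S2.card := Finset.card_union_le _ _
  _ ≤ (K+1) * T + 3 * ((M+1) * (N/(2^(M-1)-1)+1)) := Nat.add_le_add hS1card hS2card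

/-- The key numeric bound: in a window at level `M ≥ 6`, `(M+1) * C(N) ≤ 16 N`. -/
lemma cnt_mul_le {M N : ℕ} (hM : 6 ≤ M) (h1 : 2^(2^(M+1)) ≤ N) (h2 : N < 2^(2^(M+2))) :
    (M+1) * cntN Cset N ≤ 16 * N := by
  have hNpos : 0 < N := lt_of_lt_of_le (Nat.pow_pos (by norm_num)) h1
  have hup := cntN_Cset_upper (by omega) h1 h2
  set K := Nat.log 2 N with hK
  set T := 2^(2^M) with hT
  set d' := 2^(M-1) - 1 with hd'
  have hTT : T * T = 2^(2^(M+1)) := by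
    rw [hT, ← pow_add]
    congr 1
    rw [pow_succ]
    ring
  have hKb : K + 1 ≤ 2^(M+2) := Nat.log_lt_of_lt_pow (by omega) h2
  have hM1 : M + 1 ≤ 2^(M+1) := (Nat.lt_two_pow_self (n := M+1)).le
  have hc1 : (M+1) * ((K+1) * T) ≤ N := by
    calc (M+1) * ((K+1) * T) ≤ 2^(M+1) * (2^(M+2) * T) :=
          Nat.mul_le_mul hM1 (Nat.mul_le_mul_right T hKb)
    _ = 2^(2*M+3) * T := by rw [← mul_assoc, ← pow_add]; ring_nf
    _ ≤ T * T := Nat.mul_le_mul_right T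
          (Nat.pow_le_pow_right (by norm_num) (lin_le_two_pow (by omega)))
    _ = 2^(2^(M+1)) := hTT
    _ ≤ N := h1
  have hd'ge : 2^(M-2) ≤ d' := by
    have h2eq : 2^(M-1) = 2 * 2^(M-2) := by
      have : M - 1 = (M-2) + 1 := by omega
      rw [this, pow_succ]
      ring
    have hp : 0 < 2^(M-2) := Nat.pow_pos (by norm_num)
    omega
  have hd'pos : 0 < 2^(M-2) := Nat.pow_pos (by norm_num)
  have hdiv : N / d' ≤ N / 2^(M-2) := Nat.div_le_div_left hd'ge hd'pos
  have hsq : (M+1)*(M+1) ≤ 2^M := sq_le_two_pow hM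
  have h4 : 2^M = 4 * 2^(M-2) := by
    have hm2 : M - 2 + 2 = M := by omega
    calc 2^M = 2^(M-2+2) := by rw [hm2]
    _ = 2^(M-2) * 2^2 := pow_add 2 (M-2) 2
    _ = 4 * 2^(M-2) := by ring
  have hc2a : (M+1)*(M+1) * (N / d') ≤ 4 * N := by
    calc (M+1)*(M+1) * (N / d') ≤ 2^M * (N / 2^(M-2)) := Nat.mul_le_mul hsq hdiv
    _ = 4 * (2^(M-2) * (N / 2^(M-2))) := by rw [h4]; ring
    _ ≤ 4 * N := Nat.mul_le_mul_left 4 (Nat.mul_div_le N _)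
  have hc2b : (M+1)*(M+1) ≤ N := by
    calc (M+1)*(M+1) ≤ 2^M := hsq
    _ ≤ 2^(2^(M+1)) := Nat.pow_le_pow_right (by norm_num)
          (le_trans (Nat.lt_two_pow_self (n := M)).le (Nat.pow_le_pow_right (by norm_num) (by omega)))
    _ ≤ N := h1
  calc (M+1) * cntN Cset N
      ≤ (M+1) * ((K+1) * T + 3 * ((M+1) * (N / d' + 1))) := Nat.mul_le_mul_left _ hup
  _ = (M+1) * ((K+1) * T) + 3 * ((M+1)*(M+1) * (N / d') + (M+1)*(M+1)) := by ring
  _ ≤ N + 3 * (4 * N + N) := Nat.add_le_add hc1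
        (Nat.mul_le_mul_left 3 (Nat.add_le_add hc2a hc2b))
  _ = 16 * N := by ring

/-- Window existence. -/
lemma exists_window {M₀ N : ℕ} (hM₀ : 1 ≤ M₀) (hN : 2^(2^(M₀+1)) ≤ N) :
    ∃ M, M₀ ≤ M ∧ 2^(2^(M+1)) ≤ N ∧ N < 2^(2^(M+2)) := by
  have hNpos : N ≠ 0 := by
    have : 0 < 2^(2^(M₀+1)) := Nat.pow_pos (by norm_num)
    omega
  set J := Nat.log 2 N with hJ
  have hJ1 : 2^J ≤ N := Nat.pow_log_le_self 2 hNpos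
  have hJ2 : N < 2^(J+1) := Nat.lt_pow_succ_log_self (by norm_num) N
  have hJge : 2^(M₀+1) ≤ J := (Nat.le_log_iff_pow_le (by norm_num) hNpos).2 hN
  have hJpos : J ≠ 0 := by
    have := two_le_two_pow (m := M₀+1) (by omega)
    omega
  set P := Nat.log 2 J with hP
  have hP1 : 2^P ≤ J := Nat.pow_log_le_self 2 hJpos
  have hP2 : J < 2^(P+1) := Nat.lt_pow_succ_log_self (by norm_num) J
  have hPge : M₀ + 1 ≤ P := (Nat.le_log_iff_pow_le (by norm_num) hJpos).2 hJge
  refine ⟨P - 1, by omega, ?_, ?_⟩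
  · have hp : P - 1 + 1 = P := by omega
    rw [hp]
    calc 2^(2^P) ≤ 2^J := Nat.pow_le_pow_right (by norm_num) hP1
    _ ≤ N := hJ1
  · have hp : P - 1 + 2 = P + 1 := by omega
    rw [hp]
    calc N < 2^(J+1) := hJ2
    _ ≤ 2^(2^(P+1)) := Nat.pow_le_pow_right (by norm_num) (by omega)

/-- Real lower bound for the B count in a window. -/
lemma B_lower_real {M N : ℕ} (hM : 2 ≤ M) (h1 : 2^(2^(M+1)) ≤ N) (h2 : N < 2^(2^(M+2))) :
    (N : ℝ) ≤ 2^(M+1) * (cntN Bset N : ℝ) := by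
  set d := 2^M - 1 with hd
  set L := 2^(2^M) with hL
  have hdpos : 0 < d := by have := two_le_two_pow (m := M) (by omega); omega
  have hLN : L ≤ N := le_trans (Nat.pow_le_pow_right (by norm_num)
    (Nat.pow_le_pow_right (by norm_num) (by omega))) h1
  have hnat : N / d - L / d ≤ cntN Bset N := cntN_Bset_lower (by omega) hLN h2
  set q := N / d with hq
  set v := L / d with hv
  -- real facts
  have hNq : (N:ℝ) < d * q + d := by
    have h := Nat.div_add_mod N d
    have hmod : N % d < d := Nat.mod_lt N hdpos
    have : N < d * q + d := by
      calc N = d * q + N % d := h.symm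
      _ < d * q + d := Nat.add_lt_add_left hmod _
    exact_mod_cast this
  have hvL : (v:ℝ) ≤ L := by
    exact_mod_cast Nat.div_le_self L d
  have hcnt : (q:ℝ) - v ≤ (cntN Bset N : ℝ) := by
    rcases le_total v q with h | h
    · have : ((q - v : ℕ) : ℝ) = (q:ℝ) - v := by
        push_cast [Nat.cast_sub h]
        ring
      rw [← this]
      exact_mod_cast hnat
    · have h1' : (q:ℝ) ≤ v := by exact_mod_cast h
      have : (0:ℝ) ≤ (cntN Bset N : ℝ) := Nat.cast_nonneg _
      linarith
  have hdR : (d:ℝ) = 2^M - 1 := by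
    have h2p : (1:ℕ) ≤ 2^M := Nat.one_le_two_pow
    push_cast [hd, Nat.cast_sub h2p]
    ring
  have hLL : (L:ℝ) * L ≤ N := by
    have : (L * L : ℕ) = 2^(2^(M+1)) := by
      rw [hL, ← pow_add]
      congr 1
      rw [pow_succ]
      ring
    have h' : (L * L : ℕ) ≤ N := by rw [this]; exact h1
    exact_mod_cast h'
  have hLb : (2:ℝ)^(M+2) ≤ L := by
    have hn : 2^(M+2) ≤ L := Nat.pow_le_pow_right (by norm_num) (add_two_le_two_pow hM)
    exact_mod_cast hn
  have hq0 : (0:ℝ) ≤ q := Nat.cast_nonneg _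
  have hL1 : (1:ℝ) ≤ L := by
    have : 1 ≤ L := Nat.one_le_two_pow
    exact_mod_cast this
  -- goal : N ≤ 2^(M+1) * cnt.  Enough : N ≤ 2^(M+1) * (q - v)
  have hkey : (N:ℝ) ≤ 2^(M+1) * ((q:ℝ) - v) := by
    have hPd : (2:ℝ)^(M+1) = 2 * d + 2 := by
      rw [hdR]
      ring
    have hP2L : (2:ℝ) * 2^(M+1) ≤ L := by
      have : (2:ℝ) * 2^(M+1) = 2^(M+2) := by ring
      linarith [hLb, this.le]
    -- 2^(M+1) * q ≥ (2d+2) q ≥ 2 d q ≥ 2 (N - d)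
    have hdq : (N:ℝ) - d ≤ (d:ℝ) * q := by linarith
    have hPL : (2:ℝ)^(M+1) * L ≤ (L:ℝ) * L / 2 := by
      nlinarith [hL1, hP2L]
    nlinarith [hdq, hvL, hLL, hPL, hq0, hPd, hP2L, hL1,
      mul_le_mul_of_nonneg_left hvL (show (0:ℝ) ≤ 2^(M+1) by positivity)]
  calc (N:ℝ) ≤ 2^(M+1) * ((q:ℝ) - v) := hkey
  _ ≤ 2^(M+1) * (cntN Bset N : ℝ) := by
      apply mul_le_mul_of_nonneg_left hcnt
      positivity

theorem stmt_12 : ∃ A B : Set ℕ, (∀ n ∈ A, 1 ≤ n) ∧ (∀ n ∈ B, 1 ≤ n) ∧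
    (∃ c : ℝ, 0 < c ∧ ∀ᶠ x : ℝ in atTop,
      (countOf A (Real.log x / Real.log 2) : ℝ) * (countOf B x : ℝ) > c * x) ∧
    Filter.limsup (fun x : ℝ =>
      (countOf {n : ℕ | ∃ a ∈ A, ∃ b ∈ B, n = 2 ^ a + b} x : ℝ) / x) atTop = 0 := by
  refine ⟨Aset, Bset, fun n hn => hn, ?_, ⟨1/4, by norm_num, ?_⟩, ?_⟩
  · -- B positive
    rintro n ⟨m, hm, hn1, -, -⟩
    exact le_trans Nat.one_le_two_pow hn1
  · -- the product bound
    rw [eventually_atTop]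
    refine ⟨256, fun x hx => ?_⟩
    have hx0 : (0:ℝ) < x := by linarith
    have hx1 : (1:ℝ) ≤ x := by linarith
    set N := ⌊x⌋₊ with hN
    have hNx : (N:ℝ) ≤ x := Nat.floor_le hx0.le
    have hxN1 : x < N + 1 := Nat.lt_floor_add_one x
    have hN256 : 2^(2^(2+1)) ≤ N := by
      apply Nat.le_floor
      norm_num
      linarith
    obtain ⟨M, hM2, hw1, hw2⟩ := exists_window (by norm_num) hN256
    -- A count
    have hlog2 : (0:ℝ) < Real.log 2 := Real.log_pos (by norm_num)
    have hy0 : 0 ≤ Real.log x / Real.log 2 :=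
      div_nonneg (Real.log_nonneg hx1) hlog2.le
    rw [countOf_eq_cntN _ _ hy0, cntN_Aset, countOf_eq_cntN _ x hx0.le]
    have hA : (2:ℝ)^(M+1) ≤ (⌊Real.log x / Real.log 2⌋₊ : ℝ) := by
      have harg : ((2^(M+1) : ℕ) : ℝ) ≤ Real.log x / Real.log 2 := by
        rw [le_div_iff₀ hlog2]
        have hxe : (2:ℝ)^((2:ℕ)^(M+1)) ≤ x := by
          calc (2:ℝ)^((2:ℕ)^(M+1)) = ((2^(2^(M+1)) : ℕ) : ℝ) := by push_cast; ring
          _ ≤ (N:ℝ) := by exact_mod_cast hw1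
          _ ≤ x := hNx
        calc ((2^(M+1):ℕ):ℝ) * Real.log 2 = Real.log ((2:ℝ)^((2:ℕ)^(M+1))) := by
              rw [Real.log_pow]
              try push_cast
              try ring
        _ ≤ Real.log x := Real.log_le_log (by positivity) hxe
      have := Nat.le_floor harg
      calc (2:ℝ)^(M+1) = ((2^(M+1):ℕ):ℝ) := by push_cast; ring
      _ ≤ _ := by exact_mod_cast this
    have hB := B_lower_real hM2 hw1 hw2
    have hBnn : (0:ℝ) ≤ (cntN Bset N : ℝ) := Nat.cast_nonneg _
    have hprod : (N:ℝ) ≤ (⌊Real.log x / Real.log 2⌋₊ : ℝ) * (cntN Bset N : ℝ) := by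
      calc (N:ℝ) ≤ 2^(M+1) * (cntN Bset N : ℝ) := hB
      _ ≤ (⌊Real.log x / Real.log 2⌋₊ : ℝ) * (cntN Bset N : ℝ) :=
          mul_le_mul_of_nonneg_right hA hBnn
    have : (1/4 : ℝ) * x < x - 1 := by linarith
    calc (1/4 : ℝ) * x < x - 1 := this
    _ < (N:ℝ) := by linarith
    _ ≤ _ := hprod
  · -- the limsup
    have htend : Tendsto (fun x : ℝ =>
        (countOf {n : ℕ | ∃ a ∈ Aset, ∃ b ∈ Bset, n = 2 ^ a + b} x : ℝ) / x) atTop (nhds 0) := by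
      rw [Metric.tendsto_nhds]
      intro ε hε
      obtain ⟨M₁, hM₁⟩ := exists_nat_gt (16/ε)
      set M₀ := max M₁ 6 with hM₀
      rw [eventually_atTop]
      refine ⟨2^(2^(M₀+1)), fun x hx => ?_⟩
      show dist ((countOf Cset x : ℝ) / x) 0 < ε
      have hpow1 : (1:ℝ) ≤ (2:ℝ)^((2:ℕ)^(M₀+1)) := by
        apply one_le_pow₀ (by norm_num : (1:ℝ) ≤ 2)
      have hx0 : (0:ℝ) < x := by
        calc (0:ℝ) < 1 := one_pos
        _ ≤ (2:ℝ)^((2:ℕ)^(M₀+1)) := hpow1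
        _ ≤ x := by exact_mod_cast hx
      set N := ⌊x⌋₊ with hN
      have hNx : (N:ℝ) ≤ x := Nat.floor_le hx0.le
      have hNge : 2^(2^(M₀+1)) ≤ N := Nat.le_floor (by exact_mod_cast hx)
      obtain ⟨M, hMM₀, hw1, hw2⟩ := exists_window (by omega) hNge
      have hM6 : 6 ≤ M := le_trans (le_max_right M₁ 6) hMM₀
      have hnat := cnt_mul_le hM6 hw1 hw2
      have hNpos : 0 < N := lt_of_lt_of_le (Nat.pow_pos (by norm_num)) hw1
      -- the ratio bound
      have hcount : countOf Cset x = cntN Cset N := countOf_eq_cntN _ _ hx0.le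
      have hratio : (countOf Cset x : ℝ) / x ≤ 16 / (M+1) := by
        rw [hcount, div_le_div_iff₀ hx0 (by positivity)]
        calc (cntN Cset N : ℝ) * (M+1) = (((M+1) * cntN Cset N : ℕ) : ℝ) := by
              push_cast; ring
        _ ≤ ((16 * N : ℕ) : ℝ) := by exact_mod_cast hnat
        _ = 16 * (N:ℝ) := by push_cast; ring
        _ ≤ 16 * x := by linarith
      have hMε : 16 / ((M:ℝ)+1) < ε := by
        rw [div_lt_iff₀ (by positivity)]
        have hM₁M : (M₁:ℝ) ≤ M + 1 := by
          have : M₁ ≤ M + 1 := by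
            have := le_trans (le_max_left M₁ 6) hMM₀
            omega
          exact_mod_cast this
        have h16 : 16/ε < (M₁:ℝ) := hM₁
        have : 16 < ε * M₁ := by
          rw [div_lt_iff₀ hε] at h16
          linarith
        calc (16:ℝ) < ε * M₁ := this
        _ ≤ ε * (M+1) := by
            apply mul_le_mul_of_nonneg_left hM₁M hε.le
      have hnn : (0:ℝ) ≤ (countOf Cset x : ℝ) / x := by positivity
      rw [Real.dist_eq, sub_zero, abs_of_nonneg hnn]
      exact lt_of_le_of_lt hratio hMε
    exact htend.limsup_eq
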